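/- Let G be the sequence defined by G(0) = G(1) = 1 and G(n) = 2·∑_{m=1}^{n−1} G(m)·G(n−1−m) for n ≥ 2, and for real x with |x| < (√2 − 1)/2 let ζ(x) = ∑_{n≥0} G(n)·xⁿ. Then ζ(x) satisfies the quadratic equation 2x·ζ(x)² − (2x + 1)·ζ(x) + (x + 1) = 0. -/

import Mathlib

lemma aux_summable (G : ℕ → ℕ) (hG0 : G 0 = 1) (hG1 : G 1 = 1)
    (hGrec : ∀ n, 2 ≤ n → G n = 2 * ∑ m ∈ Finset.Ico 1 n, G m * G (n - 1 - m))
    (y : ℝ) (hy0 : 0 < y) (hy : y < (Real.sqrt 2 - 1) / 2) :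
    Summable (fun n => (G n : ℝ) * y ^ n) := by
  set a : ℕ → ℝ := fun n => (G n : ℝ) * y ^ n with ha
  have hanneg : ∀ n, 0 ≤ a n := fun n => by positivity
  have hs2 : Real.sqrt 2 ^ 2 = 2 := Real.sq_sqrt (by norm_num)
  have hs2pos : (0:ℝ) < Real.sqrt 2 := Real.sqrt_pos.mpr (by norm_num)
  set D : ℝ := 1 - 4*y - 4*y^2 with hD
  have hDpos : 0 < D := by nlinarith [hy, hs2, hs2pos]
  have hsqD : Real.sqrt D ^ 2 = D := Real.sq_sqrt hDpos.le
  have hsqDnn : 0 ≤ Real.sqrt D := Real.sqrt_nonneg _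
  set L : ℝ := (1 + 2*y - Real.sqrt D) / (4*y) with hL
  have hyhalf : y < 1/2 := by nlinarith [hy, hs2, hs2pos]
  have hsqD_le : Real.sqrt D ≤ 1 - 2*y := by
    rw [show (1:ℝ) - 2*y = Real.sqrt ((1-2*y)^2) by
      rw [Real.sqrt_sq (by linarith)]]
    apply Real.sqrt_le_sqrt
    nlinarith
  have hL1 : 1 ≤ L := by
    rw [hL, le_div_iff₀ (by linarith)]
    linarith
  have hLq : 2*y*L^2 - (2*y+1)*L + (y+1) = 0 := by
    rw [hL]
    field_simp
    nlinarith [hsqD]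
  -- partial sums bounded by L
  have key : ∀ N, ∑ n ∈ Finset.range N, a n ≤ L := by
    intro N
    induction N with
    | zero => simp; linarith
    | succ N ih =>
      rcases Nat.eq_zero_or_pos N with h0 | hNpos
      · subst h0
        simpa [ha, hG0] using hL1
      -- N ≥ 1
      have hsplit : ∑ n ∈ Finset.range (N+1), a n
          = a 0 + a 1 + ∑ n ∈ Finset.Ico 2 (N+1), a n := by
        rw [Finset.range_eq_Ico, ← Finset.sum_Ico_consecutive a (by norm_num : 0 ≤ 2) (by omega : 2 ≤ N+1)]
        have : Finset.Ico 0 2 = {0, 1} := rfl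
        rw [this]
        simp [ha]
      have hconv : ∀ n ∈ Finset.Ico 2 (N+1),
          a n = 2*y * ∑ m ∈ Finset.Ico 1 n, a m * a (n-1-m) := by
        intro n hn
        simp only [Finset.mem_Ico] at hn
        rw [ha]
        simp only
        rw [hGrec n hn.1]
        push_cast
        simp only [Finset.sum_mul, Finset.mul_sum]
        apply Finset.sum_congr rfl
        intro m hm
        simp only [Finset.mem_Ico] at hm
        have : y ^ n = y * (y ^ m * y ^ (n-1-m)) := by
          rw [← pow_add, ← pow_succ']
          congr 1
          omega
        rw [this]
        ring
      -- bound the convolution sum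
      have hbound : ∑ n ∈ Finset.Ico 2 (N+1), ∑ m ∈ Finset.Ico 1 n, a m * a (n-1-m)
          ≤ (∑ m ∈ Finset.Ico 1 N, a m) * (∑ k ∈ Finset.range N, a k) := by
        rw [Finset.sum_sigma' (Finset.Ico 2 (N+1)) (fun n => Finset.Ico 1 n) (fun n m => a m * a (n-1-m))]
        rw [Finset.sum_mul_sum, ← Finset.sum_product' (Finset.Ico 1 N) (Finset.range N) (fun i j => a i * a j)]
        have heq : ∑ x ∈ (Finset.Ico 2 (N+1)).sigma (fun n => Finset.Ico 1 n), a x.snd * a (x.fst - 1 - x.snd)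
            = ∑ p ∈ (Finset.Ico 1 N ×ˢ Finset.range N).filter (fun p => p.1 + p.2 + 1 ≤ N), a p.1 * a p.2 := by
          apply Finset.sum_nbij' (fun x => (x.snd, x.fst - 1 - x.snd))
            (fun p => ⟨p.1 + p.2 + 1, p.1⟩)
          · rintro ⟨n, m⟩ hx
            simp only [Finset.mem_sigma, Finset.mem_Ico] at hx
            simp only [Finset.mem_filter, Finset.mem_product, Finset.mem_Ico, Finset.mem_range]
            omega
          · rintro ⟨m, k⟩ hp
            simp only [Finset.mem_filter, Finset.mem_product, Finset.mem_Ico, Finset.mem_range] at hp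
            simp only [Finset.mem_sigma, Finset.mem_Ico]
            omega
          · rintro ⟨n, m⟩ hx
            simp only [Finset.mem_sigma, Finset.mem_Ico] at hx
            dsimp only
            simp only [Sigma.mk.inj_iff]
            constructor
            · omega
            · exact heq_of_eq rfl
          · rintro ⟨m, k⟩ hp
            simp only [Finset.mem_filter, Finset.mem_product, Finset.mem_Ico, Finset.mem_range] at hp
            dsimp only
            simp only [Prod.mk.injEq]
            exact ⟨trivial, by omega⟩
          · rintro ⟨n, m⟩ hx
            rfl
        rw [heq]
        apply Finset.sum_le_sum_of_subset_of_nonneg (Finset.filter_subset _ _)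
        intro p _ _
        exact mul_nonneg (hanneg _) (hanneg _)
      have hIco1 : ∑ m ∈ Finset.Ico 1 N, a m = (∑ n ∈ Finset.range N, a n) - 1 := by
        rw [Finset.range_eq_Ico, ← Finset.sum_Ico_consecutive a (by norm_num : 0 ≤ 1) (by omega : 1 ≤ N)]
        norm_num [Finset.sum_Ico_eq_sum_range, ha, hG0]
      set s := ∑ n ∈ Finset.range N, a n with hsdef
      have hs0 : 0 ≤ s := Finset.sum_nonneg fun n _ => hanneg n
      have hstep : ∑ n ∈ Finset.range (N+1), a n ≤ 1 + y + 2*y*((s-1)*s) := by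
        rw [hsplit]
        have h1 : a 0 = 1 := by simp [ha, hG0]
        have h2 : a 1 = y := by simp [ha, hG1]
        rw [h1, h2]
        have hc2 := Finset.sum_congr rfl hconv
        rw [hc2, ← Finset.mul_sum]
        have hb2 := hbound
        rw [hIco1] at hb2
        have h2y : (0:ℝ) ≤ 2*y := by linarith
        linarith [mul_le_mul_of_nonneg_left hb2 h2y]
      have hprod : 0 ≤ 2*y*((L-s)*(L+s-1)) :=
        mul_nonneg (by linarith) (mul_nonneg (by linarith) (by linarith))
      nlinarith [hprod, hLq, hstep]
  exact summable_of_sum_range_le hanneg key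

theorem stmt_7 (G : ℕ → ℕ) (hG0 : G 0 = 1) (hG1 : G 1 = 1)
    (hGrec : ∀ n, 2 ≤ n → G n = 2 * ∑ m ∈ Finset.Ico 1 n, G m * G (n - 1 - m)) :
    ∀ x : ℝ, |x| < (Real.sqrt 2 - 1) / 2 →
      2 * x * (∑' n : ℕ, (G n : ℝ) * x ^ n) ^ 2 -
        (2 * x + 1) * (∑' n : ℕ, (G n : ℝ) * x ^ n) + (x + 1) = 0 := by
  intro x hx
  rcases eq_or_ne x 0 with rfl | hx0
  · have h1 : (∑' n : ℕ, (G n : ℝ) * (0:ℝ) ^ n) = 1 := by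
      rw [tsum_eq_single 0 (fun n hn => by simp [zero_pow hn])]
      simp [hG0]
    rw [h1]; ring
  · have hy0 : 0 < |x| := abs_pos.mpr hx0
    have hsy := aux_summable G hG0 hG1 hGrec |x| hy0 hx
    set a : ℕ → ℝ := fun n => (G n : ℝ) * x ^ n with ha
    have hnorm : Summable fun n => ‖a n‖ := by
      apply hsy.congr
      intro n
      simp [ha, abs_mul, abs_pow, Nat.abs_cast]
    have hsa : Summable a := hnorm.of_norm
    set c : ℕ → ℕ := fun n => ∑ m ∈ Finset.range (n+1), G m * G (n - m) with hc
    have hdiag : ∀ n : ℕ, ∑ kl ∈ Finset.HasAntidiagonal.antidiagonal n, a kl.1 * a kl.2 = (c n : ℝ) * x ^ n := by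
      intro n
      rw [Finset.Nat.sum_antidiagonal_eq_sum_range_succ (fun i j => a i * a j)]
      rw [hc]
      push_cast
      rw [Finset.sum_mul]
      apply Finset.sum_congr rfl
      intro k hk
      simp only [Finset.mem_range] at hk
      have hxk : x ^ n = x ^ k * x ^ (n - k) := by
        rw [← pow_add]; congr 1; omega
      rw [ha]
      dsimp only
      rw [hxk]
      ring
    have hcau : (∑' n, a n) * (∑' n, a n) = ∑' n, (c n : ℝ) * x ^ n := by
      rw [tsum_mul_tsum_eq_tsum_sum_antidiagonal_of_summable_norm hnorm hnorm]
      exact tsum_congr hdiag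
    have hsc : Summable fun n => (c n : ℝ) * x ^ n := by
      apply ((summable_norm_sum_mul_antidiagonal_of_summable_norm hnorm hnorm).of_norm).congr
      intro n
      exact hdiag n
    have hcrec : ∀ n, 1 ≤ n → 2 * c n = 2 * G n + G (n+1) := by
      intro n hn
      have h1 : c n = G n + ∑ m ∈ Finset.Ico 1 (n+1), G m * G (n - m) := by
        rw [hc]
        dsimp only
        rw [Finset.range_eq_Ico,
          ← Finset.sum_Ico_consecutive _ (by norm_num : 0 ≤ 1) (by omega : 1 ≤ n+1)]
        have : Finset.Ico 0 1 = {0} := rfl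
        rw [this]
        simp [hG0]
      have h2 : G (n+1) = 2 * ∑ m ∈ Finset.Ico 1 (n+1), G m * G (n - m) := by
        have h := hGrec (n+1) (by omega)
        simpa using h
      omega
    have hsa1 : Summable fun n => a (n+1) := (summable_nat_add_iff 1).mpr hsa
    have hsa2 : Summable fun n => a (n+2) := (summable_nat_add_iff 2).mpr hsa
    have hsc1 : Summable fun n => (c (n+1) : ℝ) * x ^ (n+1) :=
      (summable_nat_add_iff (f := fun n => (c n : ℝ) * x ^ n) 1).mpr hsc
    have hBs : Summable fun n => (G (n+2) : ℝ) * x ^ (n+1) := by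
      apply (hsa2.mul_left x⁻¹).congr
      intro n
      rw [ha]
      dsimp only
      rw [pow_succ]
      field_simp
    set B := ∑' n, (G (n+2) : ℝ) * x ^ (n+1) with hBdef
    have hxB : x * B = ∑' n, a (n+2) := by
      rw [hBdef, ← tsum_mul_left]
      apply tsum_congr
      intro n
      rw [ha]
      dsimp only
      rw [pow_succ, pow_succ]
      ring
    have hA1 : (∑' n, a (n+1)) = x + x * B := by
      rw [Summable.tsum_eq_zero_add hsa1, hxB]
      have : a 1 = x := by simp [ha, hG1]
      rw [this]
    have e3 : (∑' n, a n) = 1 + x + x * B := by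
      rw [Summable.tsum_eq_zero_add hsa, hA1]
      have : a 0 = 1 := by simp [ha, hG0]
      rw [this]
      ring
    have e1 : (∑' n, a n) ^ 2 = 1 + ∑' n, (c (n+1) : ℝ) * x ^ (n+1) := by
      rw [sq, hcau, Summable.tsum_eq_zero_add hsc]
      have : (c 0 : ℝ) * x ^ 0 = 1 := by simp [hc, hG0]
      rw [this]
    have e2 : 2 * (∑' n, (c (n+1) : ℝ) * x ^ (n+1)) = 2 * x + 2 * (x * B) + B := by
      have hterm : ∀ n, 2 * ((c (n+1) : ℝ) * x ^ (n+1))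
          = 2 * a (n+1) + (G (n+2) : ℝ) * x ^ (n+1) := by
        intro n
        have h := hcrec (n+1) (by omega)
        have hcast : (2 * c (n+1) : ℝ) = 2 * (G (n+1) : ℝ) + (G (n+2) : ℝ) := by
          exact_mod_cast congrArg (Nat.cast : ℕ → ℝ) h
        rw [ha]
        dsimp only
        linear_combination x ^ (n+1) * hcast
      rw [← tsum_mul_left, tsum_congr hterm,
        Summable.tsum_add (hsa1.mul_left 2) hBs, tsum_mul_left, hA1]
      ring
    have hgoal : 2 * x * (∑' n, a n) ^ 2 - (2*x+1) * (∑' n, a n) + (x + 1) = 0 := by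
      linear_combination 2*x*e1 + x*e2 - (2*x+1)*e3
    exact hgoal
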